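/- Let E be the (L+1)×(L+1) real symmetric tridiagonal matrix with diagonal entries (1/2, 1, 1, …, 1, 1/2) and off-diagonal entries −1/2. Then the eigenvalues of E are exactly λ_k = 1 − cos(πk/(L+1)) for k = 0, 1, …, L; in particular E is positive semidefinite, its kernel is one-dimensional and spanned by the uniform vector (1,1,…,1)/√(L+1), and its smallest nonzero eigenvalue is 1 − cos(π/(L+1)). -/

import Mathlib

open Real

/-- The clock matrix. -/
noncomputable def clockE (L : ℕ) : Matrix (Fin (L + 1)) (Fin (L + 1)) ℝ :=
  Matrix.of fun (i j : Fin (L + 1)) =>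
    if (i : ℕ) = (j : ℕ) then (if (i : ℕ) = 0 ∨ (i : ℕ) = L then (1 / 2 : ℝ) else 1)
    else if (i : ℕ) + 1 = (j : ℕ) ∨ (j : ℕ) + 1 = (i : ℕ) then (-(1 / 2) : ℝ) else 0

lemma clockE_apply (L : ℕ) (i j : Fin (L + 1)) :
    clockE L i j = if (i : ℕ) = (j : ℕ)
      then (if (i : ℕ) = 0 ∨ (i : ℕ) = L then (1 / 2 : ℝ) else 1)
      else if (i : ℕ) + 1 = (j : ℕ) ∨ (j : ℕ) + 1 = (i : ℕ) then (-(1 / 2) : ℝ) else 0 := rfl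

lemma clock_sum_pair {n : ℕ} (a b : Fin n) (hab : a ≠ b) (f : Fin n → ℝ)
    (hf : ∀ j, j ≠ a → j ≠ b → f j = 0) : ∑ j, f j = f a + f b := by
  have h : ∑ j ∈ ({a, b} : Finset (Fin n)), f j = ∑ j, f j := by
    apply Finset.sum_subset (Finset.subset_univ _)
    intro x _ hx
    simp only [Finset.mem_insert, Finset.mem_singleton, not_or] at hx
    exact hf x hx.1 hx.2
  rw [← h, Finset.sum_insert (by simp [hab]), Finset.sum_singleton]

lemma clock_sum_triple {n : ℕ} (a b c : Fin n) (hab : a ≠ b) (hac : a ≠ c) (hbc : b ≠ c)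
    (f : Fin n → ℝ) (hf : ∀ j, j ≠ a → j ≠ b → j ≠ c → f j = 0) :
    ∑ j, f j = f a + f b + f c := by
  have h : ∑ j ∈ ({a, b, c} : Finset (Fin n)), f j = ∑ j, f j := by
    apply Finset.sum_subset (Finset.subset_univ _)
    intro x _ hx
    simp only [Finset.mem_insert, Finset.mem_singleton, not_or] at hx
    exact hf x hx.1 hx.2.1 hx.2.2
  rw [← h, Finset.sum_insert (by simp [hab, hac]), Finset.sum_insert (by simp [hbc]),
    Finset.sum_singleton, add_assoc]

lemma clockE_row0 {L : ℕ} (hL : 1 ≤ L) (x : Fin (L + 1) → ℝ) :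
    (clockE L).mulVec x ⟨0, by omega⟩ =
      (1 / 2) * x ⟨0, by omega⟩ - (1 / 2) * x ⟨1, by omega⟩ := by
  have ea : clockE L ⟨0, by omega⟩ ⟨0, by omega⟩ = 1 / 2 := by
    rw [clockE_apply, if_pos rfl, if_pos (Or.inl rfl)]
  have eb : clockE L ⟨0, by omega⟩ ⟨1, by omega⟩ = -(1 / 2) := by
    rw [clockE_apply, if_neg (show ¬((0 : ℕ) = 1) by omega), if_pos (Or.inl rfl)]
  have h := clock_sum_pair (n := L + 1) ⟨0, by omega⟩ ⟨1, by omega⟩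
    (by simp only [ne_eq, Fin.mk.injEq]; omega) (fun j => clockE L ⟨0, by omega⟩ j * x j)
    (fun j hj1 hj2 => by
      beta_reduce
      simp only [ne_eq, Fin.ext_iff, Fin.val_mk] at hj1 hj2
      rw [clockE_apply, if_neg (show ¬((0 : ℕ) = (j : ℕ)) by omega),
        if_neg (show ¬((0 : ℕ) + 1 = (j : ℕ) ∨ (j : ℕ) + 1 = 0) by omega), zero_mul])
  simp only [Matrix.mulVec, dotProduct]
  rw [h]
  simp only [ea, eb]
  ring

lemma clockE_rowL {L : ℕ} (hL : 1 ≤ L) (x : Fin (L + 1) → ℝ) :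
    (clockE L).mulVec x ⟨L, by omega⟩ =
      (1 / 2) * x ⟨L, by omega⟩ - (1 / 2) * x ⟨L - 1, by omega⟩ := by
  have ea : clockE L ⟨L, by omega⟩ ⟨L, by omega⟩ = 1 / 2 := by
    rw [clockE_apply, if_pos rfl, if_pos (Or.inr rfl)]
  have eb : clockE L ⟨L, by omega⟩ ⟨L - 1, by omega⟩ = -(1 / 2) := by
    rw [clockE_apply, if_neg (show ¬(L = L - 1) by omega),
      if_pos (Or.inr (show (L - 1) + 1 = L by omega))]
  have h := clock_sum_pair (n := L + 1) ⟨L, by omega⟩ ⟨L - 1, by omega⟩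
    (by simp only [ne_eq, Fin.mk.injEq]; omega) (fun j => clockE L ⟨L, by omega⟩ j * x j)
    (fun j hj1 hj2 => by
      beta_reduce
      simp only [ne_eq, Fin.ext_iff, Fin.val_mk] at hj1 hj2
      have hjlt := j.isLt
      rw [clockE_apply, if_neg (show ¬(L = (j : ℕ)) by omega),
        if_neg (show ¬(L + 1 = (j : ℕ) ∨ (j : ℕ) + 1 = L) by omega), zero_mul])
  simp only [Matrix.mulVec, dotProduct]
  rw [h]
  simp only [ea, eb]
  ring

lemma clockE_rowMid {L : ℕ} (x : Fin (L + 1) → ℝ) (i : ℕ) (h1 : 1 ≤ i) (h2 : i < L) :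
    (clockE L).mulVec x ⟨i, by omega⟩ =
      x ⟨i, by omega⟩ - (1 / 2) * x ⟨i - 1, by omega⟩ - (1 / 2) * x ⟨i + 1, by omega⟩ := by
  have ea : clockE L ⟨i, by omega⟩ ⟨i - 1, by omega⟩ = -(1 / 2) := by
    rw [clockE_apply, if_neg (show ¬(i = i - 1) by omega),
      if_pos (Or.inr (show (i - 1) + 1 = i by omega))]
  have eb : clockE L ⟨i, by omega⟩ ⟨i, by omega⟩ = 1 := by
    rw [clockE_apply, if_pos rfl, if_neg (show ¬(i = 0 ∨ i = L) by omega)]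
  have ec : clockE L ⟨i, by omega⟩ ⟨i + 1, by omega⟩ = -(1 / 2) := by
    rw [clockE_apply, if_neg (show ¬(i = i + 1) by omega), if_pos (Or.inl rfl)]
  have h := clock_sum_triple (n := L + 1) ⟨i - 1, by omega⟩ ⟨i, by omega⟩ ⟨i + 1, by omega⟩
    (by simp only [ne_eq, Fin.mk.injEq]; omega) (by simp only [ne_eq, Fin.mk.injEq]; omega)
    (by simp only [ne_eq, Fin.mk.injEq]; omega)
    (fun j => clockE L ⟨i, by omega⟩ j * x j)
    (fun j hj1 hj2 hj3 => by
      beta_reduce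
      simp only [ne_eq, Fin.ext_iff, Fin.val_mk] at hj1 hj2 hj3
      rw [clockE_apply, if_neg (show ¬(i = (j : ℕ)) by omega),
        if_neg (show ¬(i + 1 = (j : ℕ) ∨ (j : ℕ) + 1 = i) by omega), zero_mul])
  simp only [Matrix.mulVec, dotProduct]
  rw [h]
  simp only [ea, eb, ec]
  ring

/-- Eigenvector equation for the clock matrix. -/
lemma clockE_eig (L : ℕ) (hL : 1 ≤ L) (k : ℕ) :
    (clockE L).mulVec (fun j : Fin (L + 1) => Real.cos (π * k / ((L : ℝ) + 1) * ((j : ℝ) + 1 / 2)))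
      = (1 - Real.cos (π * k / ((L : ℝ) + 1))) •
        (fun j : Fin (L + 1) => Real.cos (π * k / ((L : ℝ) + 1) * ((j : ℝ) + 1 / 2))) := by
  set c : ℝ := π * k / ((L : ℝ) + 1) with hc
  have hLne : ((L : ℝ) + 1) ≠ 0 := by positivity
  have hnb : ∀ x : ℝ, Real.cos (x - c) + Real.cos (x + c) = 2 * Real.cos c * Real.cos x := by
    intro x; rw [Real.cos_sub, Real.cos_add]; ring
  have hcL : c * ((L : ℝ) + 1) = π * k := by
    rw [hc]; field_simp
  funext i
  simp only [Pi.smul_apply, smul_eq_mul]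
  obtain h0 | hLc | hmid : (i : ℕ) = 0 ∨ (i : ℕ) = L ∨ (1 ≤ (i : ℕ) ∧ (i : ℕ) < L) := by
    have := i.isLt; omega
  · have hi : i = ⟨0, by omega⟩ := Fin.ext h0
    rw [hi, clockE_row0 hL]
    simp only [Fin.val_mk, Nat.cast_zero, Nat.cast_one]
    have h1 := hnb (c * ((0 : ℝ) + 1 / 2))
    rw [show c * ((0 : ℝ) + 1 / 2) - c = -(c * ((0 : ℝ) + 1 / 2)) by ring, Real.cos_neg,
      show c * ((0 : ℝ) + 1 / 2) + c = c * ((1 : ℝ) + 1 / 2) by ring] at h1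
    linarith
  · have hi : i = ⟨L, by omega⟩ := Fin.ext hLc
    rw [hi, clockE_rowL hL]
    simp only [Fin.val_mk]
    rw [Nat.cast_sub hL, Nat.cast_one]
    have h1 := hnb (c * ((L : ℝ) + 1 / 2))
    rw [show c * ((L : ℝ) + 1 / 2) - c = c * (((L : ℝ) - 1) + 1 / 2) by ring] at h1
    have e3 : Real.cos (c * ((L : ℝ) + 1 / 2) + c) = Real.cos (c * ((L : ℝ) + 1 / 2)) := by
      rw [show c * ((L : ℝ) + 1 / 2) + c = (k : ℝ) * π + c / 2 by linear_combination hcL,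
        show c * ((L : ℝ) + 1 / 2) = (k : ℝ) * π - c / 2 by linear_combination hcL,
        Real.cos_add, Real.cos_sub, Real.sin_nat_mul_pi]
      ring
    rw [e3] at h1
    linarith
  · obtain ⟨hi1, hi2⟩ := hmid
    have hi : i = ⟨(i : ℕ), by omega⟩ := Fin.ext rfl
    rw [hi, clockE_rowMid _ (i : ℕ) hi1 hi2]
    simp only [Fin.val_mk]
    rw [Nat.cast_sub hi1, Nat.cast_one, Nat.cast_add]
    have h1 := hnb (c * ((i : ℝ) + 1 / 2))
    rw [show c * ((i : ℝ) + 1 / 2) - c = c * (((i : ℝ) - 1) + 1 / 2) by ring,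
      show c * ((i : ℝ) + 1 / 2) + c = c * (((i : ℝ) + 1) + 1 / 2) by ring] at h1
    linarith

lemma clockE_theta_mem (L : ℕ) (k : Fin (L + 1)) :
    π * (k : ℝ) / ((L : ℝ) + 1) ∈ Set.Icc (0 : ℝ) π := by
  constructor
  · positivity
  · rw [div_le_iff₀ (by positivity)]
    have hk : (k : ℝ) ≤ (L : ℝ) := by exact_mod_cast Nat.lt_succ_iff.mp k.isLt
    nlinarith [Real.pi_pos]

/-- Eigenvectors are nonzero. -/
lemma clockE_eigvec_ne (L : ℕ) (k : Fin (L + 1)) :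
    (fun j : Fin (L + 1) => Real.cos (π * (k : ℝ) / ((L : ℝ) + 1) * ((j : ℝ) + 1 / 2))) ≠ 0 := by
  intro h
  set c : ℝ := π * (k : ℝ) / ((L : ℝ) + 1) with hc
  have hmem := clockE_theta_mem L k
  have hlt : c < π := by
    rw [hc, div_lt_iff₀ (by positivity)]
    have hk : (k : ℝ) < (L : ℝ) + 1 := by exact_mod_cast k.isLt
    nlinarith [Real.pi_pos]
  have hpos : 0 < Real.cos (c * ((0 : ℝ) + 1 / 2)) := by
    apply Real.cos_pos_of_mem_Ioo
    constructor
    · have : (0 : ℝ) ≤ c := hmem.1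
      nlinarith [Real.pi_pos]
    · nlinarith [hmem.1]
  have h0 := congrFun h ⟨0, by omega⟩
  simp only [Fin.val_mk, Nat.cast_zero, Pi.zero_apply] at h0
  rw [h0] at hpos
  exact lt_irrefl 0 hpos

/-- Spectrum of the clock-register propagation matrix in Kitaev's proof. -/
theorem clock_matrix_spectrum (L : ℕ) (hL : 1 ≤ L)
    (E : Matrix (Fin (L + 1)) (Fin (L + 1)) ℝ)
    (hE : E = Matrix.of fun (i j : Fin (L + 1)) =>
      if (i : ℕ) = (j : ℕ) then (if (i : ℕ) = 0 ∨ (i : ℕ) = L then (1 / 2 : ℝ) else 1)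
      else if (i : ℕ) + 1 = (j : ℕ) ∨ (j : ℕ) + 1 = (i : ℕ) then (-(1 / 2) : ℝ) else 0) :
    spectrum ℝ E = Set.range (fun k : Fin (L + 1) => 1 - Real.cos (π * k / (L + 1))) ∧
    E.PosSemidef ∧
    LinearMap.ker E.mulVecLin =
      Submodule.span ℝ {(fun _ => 1 / Real.sqrt (L + 1) : Fin (L + 1) → ℝ)} ∧
    (∀ x ∈ spectrum ℝ E, x ≠ 0 → 1 - Real.cos (π / (L + 1)) ≤ x) ∧
    (1 - Real.cos (π / (L + 1))) ∈ spectrum ℝ E := by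
  have hEc : E = clockE L := hE
  subst hEc
  set μ : Fin (L + 1) → ℝ := fun k => 1 - Real.cos (π * k / (L + 1)) with hμ
  set v : Fin (L + 1) → (Fin (L + 1) → ℝ) :=
    fun k j => Real.cos (π * (k : ℝ) / ((L : ℝ) + 1) * ((j : ℝ) + 1 / 2)) with hv
  -- the endomorphism
  set T := Matrix.toLinAlgEquiv' (clockE L) with hT
  have hspecT : spectrum ℝ T = spectrum ℝ (clockE L) := AlgEquiv.spectrum_eq _ _
  have hEigvec : ∀ k : Fin (L + 1), Module.End.HasEigenvector T (μ k) (v k) := by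
    intro k
    refine ⟨Module.End.mem_eigenspace_iff.mpr ?_, clockE_eigvec_ne L k⟩
    have h := clockE_eig L hL (k : ℕ)
    show Matrix.toLinAlgEquiv' (clockE L) (v k) = μ k • v k
    rw [Matrix.toLinAlgEquiv'_apply]
    exact h
  have hEV : ∀ k : Fin (L + 1), Module.End.HasEigenvalue T (μ k) := fun k =>
    Module.End.hasEigenvalue_of_hasEigenvector (hEigvec k)
  -- injectivity of μ
  have hμinj : Function.Injective μ := by
    intro a b hab
    have h1 : Real.cos (π * (a : ℝ) / ((L : ℝ) + 1)) = Real.cos (π * (b : ℝ) / ((L : ℝ) + 1)) := by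
      simp only [hμ] at hab; linarith
    have h2 := Real.injOn_cos (clockE_theta_mem L a) (clockE_theta_mem L b) h1
    field_simp at h2
    exact Fin.ext (by exact_mod_cast h2)
  -- the spectrum
  have hspec : spectrum ℝ (clockE L) = Set.range μ := by
    rw [← hspecT]
    ext x
    constructor
    · intro hx
      by_contra hxr
      have hxev : Module.End.HasEigenvalue T x :=
        Module.End.hasEigenvalue_iff_mem_spectrum.mpr hx
      obtain ⟨w, hw⟩ := hxev.exists_hasEigenvector
      set μ' : Option (Fin (L + 1)) → ℝ := fun o => o.elim x μ with hμ'
      set v' : Option (Fin (L + 1)) → (Fin (L + 1) → ℝ) := fun o => o.elim w v with hv'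
      have hxr' : ∀ k, μ k ≠ x := by
        intro k hk
        exact hxr ⟨k, hk⟩
      have hinj : Function.Injective μ' := by
        intro a b hab
        match a, b with
        | none, none => rfl
        | none, some b =>
          simp only [hμ', Option.elim_none, Option.elim_some] at hab
          exact absurd hab.symm (hxr' b)
        | some a, none =>
          simp only [hμ', Option.elim_none, Option.elim_some] at hab
          exact absurd hab (hxr' a)
        | some a, some b => exact congrArg some (hμinj hab)
      have hli : LinearIndependent ℝ v' :=
        Module.End.eigenvectors_linearIndependent' T μ' hinj v'
          (fun o => by cases o with
            | none => exact hw
            | some k => exact hEigvec k)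
      have hcard := hli.fintype_card_le_finrank
      rw [Module.finrank_fintype_fun_eq_card] at hcard
      simp [Fintype.card_option] at hcard
    · rintro ⟨k, rfl⟩
      exact Module.End.hasEigenvalue_iff_mem_spectrum.mp (hEV k)
  -- symmetry
  have hherm : (clockE L).IsHermitian := by
    refine Matrix.ext fun i j => ?_
    rw [Matrix.conjTranspose_apply, star_trivial]
    rw [clockE_apply, clockE_apply]
    rcases eq_or_ne (i : ℕ) (j : ℕ) with h | h
    · rw [h]
    · rw [if_neg h, if_neg (Ne.symm h)]
      exact if_congr or_comm rfl rfl
  -- positive semidefinite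
  have hpsd : (clockE L).PosSemidef := by
    apply (Matrix.IsHermitian.posSemidef_iff_eigenvalues_nonneg hherm).mpr
    intro i
    rw [Pi.zero_apply]
    have hm := Matrix.IsHermitian.eigenvalues_mem_spectrum_real hherm i
    rw [hspec] at hm
    obtain ⟨k, hk⟩ := hm
    rw [← hk]
    have := Real.cos_le_one (π * (k : ℝ) / ((L : ℝ) + 1))
    simp only [hμ]
    push_cast
    linarith
  -- kernel
  have hker : LinearMap.ker (clockE L).mulVecLin =
      Submodule.span ℝ {(fun _ => 1 / Real.sqrt (L + 1) : Fin (L + 1) → ℝ)} := by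
    have hsqrt : Real.sqrt ((L : ℝ) + 1) ≠ 0 := by positivity
    apply le_antisymm
    · intro x hx
      have hx0 : (clockE L).mulVec x = 0 := by
        simpa [Matrix.mulVecLin_apply] using hx
      have claim : ∀ n : ℕ, ∀ hn : n ≤ L, x ⟨n, by omega⟩ = x ⟨0, by omega⟩ := by
        intro n
        induction n using Nat.strong_induction_on with
        | _ n ih =>
          intro hn
          match n, hn with
          | 0, _ => rfl
          | 1, hn =>
            have h0 := congrFun hx0 ⟨0, by omega⟩
            rw [clockE_row0 hL] at h0
            simp only [Pi.zero_apply] at h0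
            linarith
          | (m + 2), hn =>
            have h0 := congrFun hx0 ⟨m + 1, by omega⟩
            rw [clockE_rowMid x (m + 1) (by omega) (by omega)] at h0
            simp only [Pi.zero_apply, Nat.add_sub_cancel] at h0
            have e1 := ih (m + 1) (by omega) (by omega)
            have e2 := ih m (by omega) (by omega)
            have : x ⟨m + 1 + 1, by omega⟩ = x ⟨0, by omega⟩ := by linarith
            exact this
      rw [Submodule.mem_span_singleton]
      refine ⟨x ⟨0, by omega⟩ * Real.sqrt ((L : ℝ) + 1), funext fun j => ?_⟩
      have hj : x j = x ⟨0, by omega⟩ := by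
        have := claim (j : ℕ) (by have := j.isLt; omega)
        rwa [show (⟨(j : ℕ), by omega⟩ : Fin (L + 1)) = j from Fin.ext rfl] at this
      simp only [Pi.smul_apply, smul_eq_mul, hj]
      push_cast
      field_simp
    · rw [Submodule.span_le, Set.singleton_subset_iff]
      have h1 : (clockE L).mulVec (fun _ => (1 : ℝ)) = 0 := by
        have h := clockE_eig L hL 0
        simpa using h
      have h2 : (fun _ => 1 / Real.sqrt ((L : ℝ) + 1) : Fin (L + 1) → ℝ)
          = (1 / Real.sqrt ((L : ℝ) + 1)) • (fun _ => (1 : ℝ) : Fin (L + 1) → ℝ) := by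
        funext j; simp
      rw [SetLike.mem_coe, LinearMap.mem_ker, Matrix.mulVecLin_apply, h2,
        Matrix.mulVec_smul, h1, smul_zero]
  refine ⟨?_, hpsd, ?_, ?_, ?_⟩
  · rw [hspec]
  · exact hker
  · intro x hx hxne
    rw [hspec] at hx
    obtain ⟨k, rfl⟩ := hx
    rcases Nat.eq_zero_or_pos (k : ℕ) with hk0 | hk1
    · exact absurd (by
        simp only [hμ]
        rw [show ((k : ℕ) : ℝ) = 0 by exact_mod_cast hk0]
        norm_num) hxne
    · have hk1' : (1 : ℝ) ≤ ((k : ℕ) : ℝ) := by exact_mod_cast hk1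
      have hle : π / ((L : ℝ) + 1) ≤ π * (k : ℝ) / ((L : ℝ) + 1) := by
        rw [div_le_div_iff₀ (by positivity) (by positivity)]
        nlinarith [mul_nonneg (mul_nonneg Real.pi_pos.le
          (by positivity : (0 : ℝ) ≤ (L : ℝ) + 1))
          (by linarith : (0 : ℝ) ≤ ((k : ℕ) : ℝ) - 1)]
      have hc := Real.cos_le_cos_of_nonneg_of_le_pi
        (by positivity : (0 : ℝ) ≤ π / ((L : ℝ) + 1))
        (clockE_theta_mem L k).2 hle
      simp only [hμ]
      linarith
  · rw [hspec]
    refine ⟨⟨1, by omega⟩, ?_⟩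
    simp only [hμ, Fin.val_mk, Nat.cast_one, mul_one]
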